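/- Let μ > 0, ω ∈ ℝ, and let γ : ℝ → ℝ × ℝ be a solution of the Hopf normal form system with γ(0) ≠ (0,0). Then ‖γ(t)‖² → μ as t → +∞; that is, for μ > 0 every nonzero trajectory converges to the limit cycle of radius √μ created by the Hopf bifurcation. -/

import Mathlib

open Filter Topology

/-- The Hopf normal form vector field with parameters `μ`, `ω`. -/
def hopfVF (μ ω : ℝ) (p : ℝ × ℝ) : ℝ × ℝ :=
  (μ * p.1 - ω * p.2 - p.1 * (p.1 ^ 2 + p.2 ^ 2),
   ω * p.1 + μ * p.2 - p.2 * (p.1 ^ 2 + p.2 ^ 2))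

private lemma hopf_logistic_deriv (μ A t : ℝ)
    (hD : A * Real.exp (2 * μ * t) + (μ - A) ≠ 0) :
    HasDerivAt (fun t => μ * A * Real.exp (2 * μ * t) /
        (A * Real.exp (2 * μ * t) + (μ - A)))
      (2 * (μ * A * Real.exp (2 * μ * t) / (A * Real.exp (2 * μ * t) + (μ - A))) *
        (μ - μ * A * Real.exp (2 * μ * t) / (A * Real.exp (2 * μ * t) + (μ - A)))) t := by
  have hE : HasDerivAt (fun t : ℝ => Real.exp (2 * μ * t)) (2 * μ * Real.exp (2 * μ * t)) t := by
    have := ((hasDerivAt_id t).const_mul (2 * μ)).exp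
    simpa [mul_comm] using this
  have hN : HasDerivAt (fun t : ℝ => μ * A * Real.exp (2 * μ * t))
      (μ * A * (2 * μ * Real.exp (2 * μ * t))) t := hE.const_mul _
  have hDd : HasDerivAt (fun t : ℝ => A * Real.exp (2 * μ * t) + (μ - A))
      (A * (2 * μ * Real.exp (2 * μ * t))) t := by
    simpa using (hE.const_mul A).add_const (μ - A)
  have := hN.div hDd hD
  refine this.congr_deriv ?_
  generalize Real.exp (2 * μ * t) = E at hD ⊢
  field_simp

theorem hopf_convergence_to_limit_cycle (μ ω : ℝ) (hμ : 0 < μ)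
    (γ : ℝ → ℝ × ℝ) (hγ : ∀ t : ℝ, HasDerivAt γ (hopfVF μ ω (γ t)) t)
    (h0 : γ 0 ≠ ((0 : ℝ), (0 : ℝ))) :
    Tendsto (fun t => (γ t).1 ^ 2 + (γ t).2 ^ 2) atTop (𝓝 μ) := by
  set R : ℝ → ℝ := fun t => (γ t).1 ^ 2 + (γ t).2 ^ 2 with hRdef
  have hRd : ∀ t, HasDerivAt R (2 * R t * (μ - R t)) t := by
    intro t
    have hx : HasDerivAt (fun s => (γ s).1) (hopfVF μ ω (γ t)).1 t := by
      simpa using ((hγ t).hasFDerivAt.fst).hasDerivAt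
    have hy : HasDerivAt (fun s => (γ s).2) (hopfVF μ ω (γ t)).2 t := by
      simpa using ((hγ t).hasFDerivAt.snd).hasDerivAt
    have := (hx.pow 2).add (hy.pow 2)
    refine this.congr_deriv ?_
    simp only [hRdef, hopfVF]
    ring
  have hRc : Continuous R := by
    rw [continuous_iff_continuousAt]; exact fun t => (hRd t).continuousAt
  set A : ℝ := R 0 with hAdef
  have hA : 0 < A := by
    rcases Prod.mk.injEq (γ 0).1 (γ 0).2 0 0 ▸ (fun h => h0 (Prod.ext_iff.mpr h)) with h
    have h' : (γ 0).1 ≠ 0 ∨ (γ 0).2 ≠ 0 := by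
      by_contra hc
      push_neg at hc
      exact h0 (Prod.ext_iff.mpr ⟨hc.1, hc.2⟩)
    rcases h' with h1 | h2
    · exact add_pos_of_pos_of_nonneg (by positivity) (sq_nonneg _)
    · exact add_pos_of_nonneg_of_pos (sq_nonneg _) (by positivity)
  set D : ℝ → ℝ := fun t => A * Real.exp (2 * μ * t) + (μ - A) with hDdef
  have hDpos : ∀ t : ℝ, 0 ≤ t → 0 < D t := by
    intro t ht
    have h1 : (1 : ℝ) ≤ Real.exp (2 * μ * t) :=
      Real.one_le_exp (by positivity)
    have : μ ≤ D t := by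
      simp only [hDdef]
      nlinarith
    linarith
  set g : ℝ → ℝ := fun t => μ * A * Real.exp (2 * μ * t) / D t with hgdef
  have hg0 : g 0 = A := by
    simp only [hgdef, hDdef, mul_zero, Real.exp_zero, mul_one]
    field_simp
    rw [add_sub_cancel, div_self hμ.ne']
  have heq : ∀ t : ℝ, 0 ≤ t → R t = g t := by
    intro T hT
    -- bounds on [0, T]
    obtain ⟨M1, hM1⟩ :=
      (isCompact_Icc : IsCompact (Set.Icc (0:ℝ) T)).exists_bound_of_continuousOn hRc.continuousOn
    have hgc : ContinuousOn g (Set.Icc (0:ℝ) T) := by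
      intro t ht
      exact (hopf_logistic_deriv μ A t (hDpos t ht.1).ne').continuousAt.continuousWithinAt
    obtain ⟨M2, hM2⟩ :=
      (isCompact_Icc : IsCompact (Set.Icc (0:ℝ) T)).exists_bound_of_continuousOn hgc
    set M : ℝ := max M1 M2 with hMdef
    have hMem : ∀ t ∈ Set.Icc (0:ℝ) T, R t ∈ Set.Icc (-M) M := by
      intro t ht
      have := hM1 t ht
      rw [Real.norm_eq_abs, abs_le] at this
      constructor
      · linarith [this.1, neg_le_neg (le_max_left M1 M2)]
      · exact this.2.trans (le_max_left M1 M2)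
    have hMemg : ∀ t ∈ Set.Icc (0:ℝ) T, g t ∈ Set.Icc (-M) M := by
      intro t ht
      have := hM2 t ht
      rw [Real.norm_eq_abs, abs_le] at this
      constructor
      · linarith [this.1, neg_le_neg (le_max_right M1 M2)]
      · exact this.2.trans (le_max_right M1 M2)
    have hM0 : 0 ≤ M := by
      have := hM1 0 (Set.mem_Icc.mpr ⟨le_refl 0, hT⟩)
      exact (norm_nonneg _).trans (this.trans (le_max_left M1 M2))
    set K : NNReal := (2 * |μ| + 4 * M).toNNReal with hKdef
    have hlip : ∀ s : ℝ, LipschitzOnWith K (fun x : ℝ => 2 * x * (μ - x)) (Set.Icc (-M) M) := by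
      intro s
      apply (convex_Icc (-M) M).lipschitzOnWith_of_nnnorm_hasDerivWithin_le
        (f' := fun x => 2 * μ - 4 * x)
      · intro x _
        have : HasDerivAt (fun x : ℝ => 2 * x * (μ - x)) (2 * μ - 4 * x) x := by
          have := ((hasDerivAt_id x).const_mul 2).mul ((hasDerivAt_const x μ).sub (hasDerivAt_id x))
          refine this.congr_deriv ?_
          simp only [id, Pi.sub_apply]
          ring
        exact this.hasDerivWithinAt
      · intro x hx
        rw [← NNReal.coe_le_coe, coe_nnnorm, hKdef,
          Real.coe_toNNReal _ (by positivity : (0:ℝ) ≤ 2 * |μ| + 4 * M)]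
        rw [Real.norm_eq_abs]
        have hxb : |x| ≤ M := abs_le.mpr ⟨hx.1, hx.2⟩
        calc |2 * μ - 4 * x| ≤ |2 * μ| + |4 * x| := abs_sub _ _
          _ ≤ 2 * |μ| + 4 * M := by
              rw [abs_mul, abs_mul]
              simp only [abs_two]
              have : |(4:ℝ)| = 4 := by norm_num
              rw [this]
              nlinarith
    have huniq : Set.EqOn R g (Set.Icc 0 T) := by
      apply ODE_solution_unique_of_mem_Icc_right (v := fun _ x => 2 * x * (μ - x))
        (s := fun _ => Set.Icc (-M) M) (fun s _ => hlip s) hRc.continuousOn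
      · intro t _
        exact (hRd t).hasDerivWithinAt
      · exact fun t ht => hMem t (Set.mem_Icc.mpr ⟨ht.1, le_of_lt ht.2⟩)
      · exact hgc
      · intro t ht
        exact ((hopf_logistic_deriv μ A t (hDpos t ht.1).ne')).hasDerivWithinAt
      · exact fun t ht => hMemg t (Set.mem_Icc.mpr ⟨ht.1, le_of_lt ht.2⟩)
      · exact hg0.symm
    exact huniq (Set.mem_Icc.mpr ⟨hT, le_refl T⟩)
  -- the limit
  have hDtop : Tendsto D atTop atTop := by
    have h1 : Tendsto (fun t : ℝ => 2 * μ * t) atTop atTop :=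
      tendsto_id.const_mul_atTop (by positivity)
    have h2 : Tendsto (fun t : ℝ => Real.exp (2 * μ * t)) atTop atTop :=
      Real.tendsto_exp_atTop.comp h1
    exact tendsto_atTop_add_const_right atTop (μ - A) (h2.const_mul_atTop hA)
  have hφ : Tendsto (fun t => μ - μ * (μ - A) / D t) atTop (𝓝 μ) := by
    have h1 : Tendsto (fun t => μ * (μ - A) / D t) atTop (𝓝 0) :=
      (tendsto_const_nhds (x := μ * (μ - A))).div_atTop hDtop
    have h2 := (tendsto_const_nhds (x := μ) (f := atTop)).sub h1
    simpa using h2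
  apply hφ.congr'
  filter_upwards [eventually_ge_atTop (0 : ℝ)] with t ht
  have hD := (hDpos t ht).ne'
  have : g t = μ - μ * (μ - A) / D t := by
    rw [hgdef, eq_sub_iff_add_eq]
    field_simp
    rw [hDdef]
    ring
  rw [← this]
  exact (heq t ht).symm
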